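/- arXiv:2307.01867 — 2 statements merged into one kernel-verified Lean document; each statement's English description precedes it below -/
import Mathlib

section
/- For each n ≥ 2, the n-th derivative of the standard Gompertz function x(t) = exp(-exp(-t)) is integrable on ℝ, with ∫_{-∞}^∞ |x^(n)(t)| dt ≤ Σ_{k=1}^{n} S(n,k) * (k-1)!, where S(n,k) is the Stirling number of the second kind. -/
/-- Stirling numbers of the second kind. -/
def stirlingSecond : ℕ → ℕ → ℕ
  | 0, 0 => 1
  | 0, _ + 1 => 0
  | _ + 1, 0 => 0
  | n + 1, k + 1 => (k + 1) * stirlingSecond n (k + 1) + stirlingSecond n k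

open Real MeasureTheory Set


noncomputable def gomF (k : ℕ) (t : ℝ) : ℝ := Real.exp (-Real.exp (-t)) * Real.exp (-t) ^ k

lemma gomF_hasDerivAt (k : ℕ) (t : ℝ) :
    HasDerivAt (gomF k) (gomF (k + 1) t - k * gomF k t) t := by
  have h1 : HasDerivAt (fun t : ℝ => Real.exp (-t)) (-Real.exp (-t)) t := by
    exact ((Real.hasDerivAt_exp (-t)).comp t (hasDerivAt_neg t)).congr_deriv (by ring)
  have h2 : HasDerivAt (fun t : ℝ => Real.exp (-Real.exp (-t)))
      (Real.exp (-Real.exp (-t)) * Real.exp (-t)) t := by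
    refine ((Real.hasDerivAt_exp (-Real.exp (-t))).comp t h1.neg).congr_deriv ?_
    ring
  have h3 : HasDerivAt (fun t : ℝ => Real.exp (-t) ^ k)
      ((k : ℝ) * Real.exp (-t) ^ (k - 1) * (-Real.exp (-t))) t := h1.pow k
  have := h2.mul h3
  refine HasDerivAt.congr_deriv (f := gomF k) this ?_
  symm
  cases k with
  | zero => simp [gomF]
  | succ m => simp only [gomF, Nat.add_sub_cancel]; push_cast; ring


lemma stirling_eq_zero_of_lt : ∀ n k : ℕ, n < k → stirlingSecond n k = 0 := by
  intro n
  induction n with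
  | zero => intro k hk; cases k with
    | zero => omega
    | succ m => rfl
  | succ m ih =>
    intro k hk
    cases k with
    | zero => omega
    | succ j =>
      show (j + 1) * stirlingSecond m (j + 1) + stirlingSecond m j = 0
      rw [ih (j+1) (by omega), ih j (by omega)]
      simp

noncomputable def gomC (n k : ℕ) : ℝ := (-1 : ℝ) ^ (n + k) * stirlingSecond n k

lemma gom_formula (x : ℝ → ℝ) (hxdef : ∀ t, x t = Real.exp (-Real.exp (-t))) (n : ℕ) :
    iteratedDeriv n x = fun t => ∑ k ∈ Finset.range (n + 1), gomC n k * gomF k t := by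
  induction n with
  | zero =>
    funext t
    simp [hxdef, gomC, gomF, stirlingSecond]
  | succ n ih =>
    rw [iteratedDeriv_succ, ih]
    funext t
    have hd : HasDerivAt (fun t => ∑ k ∈ Finset.range (n + 1), gomC n k * gomF k t)
        (∑ k ∈ Finset.range (n + 1), gomC n k * (gomF (k + 1) t - k * gomF k t)) t := by
      exact HasDerivAt.fun_sum fun k _ => (gomF_hasDerivAt k t).const_mul (gomC n k)
    rw [hd.deriv]
    set p : ℕ → ℝ := fun k => (k : ℝ) * gomC n k * gomF k t with hp
    have hp0 : p 0 = 0 := by simp [hp]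
    have hptop : p (n + 1) = 0 := by
      simp [hp, gomC, stirling_eq_zero_of_lt n (n + 1) (by omega)]
    have h1 := Finset.sum_range_succ' p (n + 1)
    have h2 := Finset.sum_range_succ p (n + 1)
    have hshift : ∑ k ∈ Finset.range (n + 1), p (k + 1)
        = ∑ k ∈ Finset.range (n + 1), p k := by
      rw [hp0] at h1; rw [hptop] at h2; linarith [h1, h2]
    have hrhs : ∑ k ∈ Finset.range (n + 2), gomC (n + 1) k * gomF k t
        = ∑ k ∈ Finset.range (n + 1), gomC (n + 1) (k + 1) * gomF (k + 1) t := by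
      rw [Finset.sum_range_succ' (fun k => gomC (n + 1) k * gomF k t) (n + 1)]
      have h0 : gomC (n + 1) 0 = 0 := by simp [gomC, stirlingSecond]
      simp [h0]
    rw [hrhs]
    have hterm : ∀ k, gomC (n + 1) (k + 1) * gomF (k + 1) t
        = gomC n k * gomF (k + 1) t - p (k + 1) := by
      intro k
      simp only [hp, gomC, stirlingSecond]
      push_cast
      have e1 : (-1 : ℝ) ^ (n + 1 + (k + 1)) = (-1 : ℝ) ^ (n + k) := by
        have e : n + 1 + (k + 1) = n + k + 2 := by omega
        rw [e, pow_succ, pow_succ]; ring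
      have e2 : (-1 : ℝ) ^ (n + (k + 1)) = -(-1 : ℝ) ^ (n + k) := by
        have e : n + (k + 1) = n + k + 1 := by omega
        rw [e, pow_succ]; ring
      rw [e1, e2]
      ring
    rw [Finset.sum_congr rfl (fun k _ => hterm k), Finset.sum_sub_distrib, hshift,
      ← Finset.sum_sub_distrib]
    exact Finset.sum_congr rfl (fun k _ => by simp [hp]; ring)

private theorem gom_deriv_aux :
    ∀ x ∈ (univ : Set ℝ), HasDerivWithinAt (rexp ∘ Neg.neg) (-rexp (-x)) univ x :=
  fun x _ ↦ mul_neg_one (rexp (-x)) ▸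
    ((Real.hasDerivAt_exp (-x)).comp x (hasDerivAt_neg x)).hasDerivWithinAt

private theorem gom_image_aux : rexp ∘ Neg.neg '' univ = Ioi 0 := by
  rw [Set.image_comp, Set.image_univ_of_surjective neg_surjective, Set.image_univ, Real.range_exp]

private theorem gom_injOn_aux : (univ : Set ℝ).InjOn (rexp ∘ Neg.neg) :=
  Real.exp_injective.injOn.comp neg_injective.injOn (univ.mapsTo_univ _)

lemma gomG_integrableOn (m : ℕ) :
    IntegrableOn (fun u : ℝ => Real.exp (-u) * u ^ m) (Ioi 0) := by
  have h := Real.GammaIntegral_convergent (s := (m : ℝ) + 1) (by positivity)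
  apply h.congr_fun ?_ measurableSet_Ioi
  intro u hu
  simp only [add_sub_cancel_right]
  rw [Real.rpow_natCast]

lemma gomG_eq (m : ℕ) (t : ℝ) :
    |(-rexp (-t))| • ((fun u : ℝ => Real.exp (-u) * u ^ m) ((rexp ∘ Neg.neg) t))
      = gomF (m + 1) t := by
  simp only [Function.comp_apply, abs_neg, abs_of_pos (Real.exp_pos (-t)), smul_eq_mul, gomF]
  rw [pow_succ]
  ring

lemma gomF_integrable (m : ℕ) : Integrable (gomF (m + 1)) := by
  have h := (integrableOn_image_iff_integrableOn_abs_deriv_smul MeasurableSet.univ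
    gom_deriv_aux gom_injOn_aux (fun u : ℝ => Real.exp (-u) * u ^ m))
  rw [gom_image_aux] at h
  have h2 := h.mp (gomG_integrableOn m)
  rw [integrableOn_univ] at h2
  exact h2.congr (Filter.Eventually.of_forall fun t => gomG_eq m t)

lemma gomF_integral (m : ℕ) : ∫ t : ℝ, gomF (m + 1) t = m.factorial := by
  have h := integral_image_eq_integral_abs_deriv_smul MeasurableSet.univ
    gom_deriv_aux gom_injOn_aux (fun u : ℝ => Real.exp (-u) * u ^ m)
  rw [gom_image_aux] at h
  have hg : ∫ u in Ioi (0:ℝ), Real.exp (-u) * u ^ m = m.factorial := by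
    rw [← Real.Gamma_nat_eq_factorial m, Real.Gamma_eq_integral (by positivity : (0:ℝ) < m + 1)]
    apply setIntegral_congr_fun measurableSet_Ioi
    intro u hu
    simp only [add_sub_cancel_right]
    rw [Real.rpow_natCast]
  rw [hg, setIntegral_univ] at h
  rw [h]
  exact integral_congr_ae (Filter.Eventually.of_forall fun t => (gomG_eq m t).symm)

lemma gomF_nonneg (k : ℕ) (t : ℝ) : 0 ≤ gomF k t :=
  mul_nonneg (Real.exp_pos _).le (pow_nonneg (Real.exp_pos _).le k)

theorem gompertz_nth_deriv_integrable
    (x : ℝ → ℝ) (hxdef : ∀ t, x t = Real.exp (-Real.exp (-t)))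
    (n : ℕ) (hn : 2 ≤ n) :
    MeasureTheory.Integrable (iteratedDeriv n x) ∧
      ∫ t : ℝ, |iteratedDeriv n x t| ≤
        ∑ k ∈ Finset.Icc 1 n, (stirlingSecond n k : ℝ) * (Nat.factorial (k - 1)) := by
  have hform := gom_formula x hxdef n
  have hform2 : iteratedDeriv n x = fun t => ∑ k ∈ Finset.Icc 1 n, gomC n k * gomF k t := by
    rw [hform]; funext t; symm
    apply Finset.sum_subset
    · intro k hk; simp only [Finset.mem_Icc] at hk; simp only [Finset.mem_range]; omega
    · intro k hk hk2
      simp only [Finset.mem_range] at hk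
      simp only [Finset.mem_Icc, not_and, not_le] at hk2
      have hk0 : k = 0 := by omega
      subst hk0
      have hs : stirlingSecond n 0 = 0 := by
        cases n with
        | zero => omega
        | succ m => rfl
      simp [gomC, hs]
  have hint : ∀ k ∈ Finset.Icc 1 n, Integrable (fun t => gomC n k * gomF k t) := by
    intro k hk
    simp only [Finset.mem_Icc] at hk
    obtain ⟨m, rfl⟩ : ∃ m, k = m + 1 := ⟨k - 1, by omega⟩
    exact (gomF_integrable m).const_mul _
  have hInt : Integrable (iteratedDeriv n x) := by
    rw [hform2]; exact integrable_finset_sum _ hint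
  refine ⟨hInt, ?_⟩
  have hFint : ∀ k ∈ Finset.Icc 1 n,
      Integrable (fun t => (stirlingSecond n k : ℝ) * gomF k t) := by
    intro k hk
    simp only [Finset.mem_Icc] at hk
    obtain ⟨m, rfl⟩ : ∃ m, k = m + 1 := ⟨k - 1, by omega⟩
    exact (gomF_integrable m).const_mul _
  have hbound : ∀ t, |iteratedDeriv n x t|
      ≤ ∑ k ∈ Finset.Icc 1 n, (stirlingSecond n k : ℝ) * gomF k t := by
    intro t
    rw [hform2]
    refine le_trans (Finset.abs_sum_le_sum_abs _ _) (Finset.sum_le_sum fun k _ => ?_)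
    rw [abs_mul, abs_of_nonneg (gomF_nonneg k t)]
    have h1 : |gomC n k| = (stirlingSecond n k : ℝ) := by
      rw [gomC, abs_mul, abs_pow, abs_neg, abs_one, one_pow, one_mul, Nat.abs_cast]
    rw [h1]
  calc ∫ t : ℝ, |iteratedDeriv n x t|
      ≤ ∫ t : ℝ, ∑ k ∈ Finset.Icc 1 n, (stirlingSecond n k : ℝ) * gomF k t :=
        integral_mono hInt.abs (integrable_finset_sum _ hFint) hbound
    _ = ∑ k ∈ Finset.Icc 1 n, (stirlingSecond n k : ℝ) * ∫ t : ℝ, gomF k t := by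
        rw [integral_finset_sum _ hFint]
        exact Finset.sum_congr rfl fun k _ => MeasureTheory.integral_const_mul _ _
    _ = ∑ k ∈ Finset.Icc 1 n, (stirlingSecond n k : ℝ) * (Nat.factorial (k - 1)) := by
        refine Finset.sum_congr rfl fun k hk => ?_
        simp only [Finset.mem_Icc] at hk
        obtain ⟨m, rfl⟩ : ∃ m, k = m + 1 := ⟨k - 1, by omega⟩
        rw [gomF_integral m, Nat.add_sub_cancel]
end

section
/- The Fourier transform of the n-th derivative of x(t) = exp(-exp(-t)) is given by (iξ)^{n-1} * Γ(1 + iξ) / √(2π), for every n ≥ 1 and real ξ, using the convention F(f)(ξ) = (1/√(2π)) ∫ f(t) e^{-iξt} dt. -/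
open MeasureTheory Polynomial Set

noncomputable def Tmap (p : Polynomial ℝ) : Polynomial ℝ := X * (p - derivative p)

noncomputable def Fg (p : Polynomial ℝ) (t : ℝ) : ℝ :=
  p.eval (Real.exp (-t)) * Real.exp (-Real.exp (-t))

lemma hasDerivAt_expneg (t : ℝ) :
    HasDerivAt (fun t : ℝ => Real.exp (-t)) (-Real.exp (-t)) t := by
  simpa using (hasDerivAt_neg t).exp

lemma hasDerivAt_Fg (p : Polynomial ℝ) (t : ℝ) :
    HasDerivAt (Fg p) (Fg (Tmap p) t) t := by
  have hu := hasDerivAt_expneg t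
  have hp : HasDerivAt (fun t : ℝ => p.eval (Real.exp (-t)))
      (p.derivative.eval (Real.exp (-t)) * (-Real.exp (-t))) t :=
    by have := (p.hasDerivAt (Real.exp (-t))).comp t hu; exact this
  have hv : HasDerivAt (fun t : ℝ => Real.exp (-Real.exp (-t)))
      (Real.exp (-Real.exp (-t)) * Real.exp (-t)) t := by
    simpa using hu.neg.exp
  have h : HasDerivAt (fun t : ℝ => p.eval (Real.exp (-t)) * Real.exp (-Real.exp (-t)))
      (p.derivative.eval (Real.exp (-t)) * (-Real.exp (-t)) * Real.exp (-Real.exp (-t)) +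
        p.eval (Real.exp (-t)) * (Real.exp (-Real.exp (-t)) * Real.exp (-t))) t := hp.mul hv
  convert h using 1
  · rfl
  simp only [Fg, Tmap, eval_mul, eval_X, eval_sub]
  ring

lemma iteratedDeriv_x (x : ℝ → ℝ) (hxdef : ∀ t, x t = Real.exp (-Real.exp (-t))) :
    ∀ n : ℕ, iteratedDeriv n x = Fg (Tmap^[n] 1)
  | 0 => by
    funext t
    simp [iteratedDeriv_zero, hxdef t, Fg]
  | (n+1) => by
    rw [iteratedDeriv_succ, iteratedDeriv_x x hxdef n]
    funext t
    rw [Function.iterate_succ_apply']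
    exact (hasDerivAt_Fg _ t).deriv

lemma integrable_exp_neg_abs' : Integrable (fun t : ℝ => Real.exp (-|t|)) := by
  have h1 : IntegrableOn (fun t : ℝ => Real.exp (-|t|)) (Ioi (0:ℝ)) := by
    refine (exp_neg_integrableOn_Ioi 0 one_pos).congr_fun (fun t ht => ?_) measurableSet_Ioi
    simp only [abs_of_pos (show (0:ℝ) < t from ht), neg_one_mul]
  have h2 : IntegrableOn (fun t : ℝ => Real.exp (-|t|)) (Iic (0:ℝ)) := by
    rw [← Measure.map_neg_eq_self (volume : Measure ℝ)]
    have m : MeasurableEmbedding fun x : ℝ => -x := (Homeomorph.neg ℝ).measurableEmbedding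
    rw [m.integrableOn_map_iff]
    simp_rw [Function.comp_def, abs_neg, neg_preimage, neg_Iic, neg_zero]
    exact (integrableOn_Ici_iff_integrableOn_Ioi).mpr h1
  rw [← integrableOn_univ, ← Set.Iic_union_Ioi (a := (0:ℝ))]
  exact h2.union h1

lemma integrable_G (j : ℕ) (hj : 1 ≤ j) :
    Integrable (fun t : ℝ => Real.exp (-t) ^ j * Real.exp (-Real.exp (-t))) := by
  have hbound : ∀ t : ℝ, Real.exp (-t) ^ j * Real.exp (-Real.exp (-t))
      ≤ (Nat.factorial (j+2) : ℝ) * Real.exp (-|t|) := by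
    intro t
    have hfac : (1:ℝ) ≤ (Nat.factorial (j+2) : ℝ) := by
      exact_mod_cast Nat.one_le_iff_ne_zero.2 (Nat.factorial_ne_zero _)
    rcases le_total 0 t with ht | ht
    · rw [abs_of_nonneg ht]
      have h1 : Real.exp (-t) ≤ 1 := Real.exp_le_one_iff.2 (by linarith)
      have h2 : Real.exp (-t) ^ j ≤ Real.exp (-t) := by
        simpa using pow_le_pow_of_le_one (Real.exp_nonneg _) h1 hj
      have h3 : Real.exp (-Real.exp (-t)) ≤ 1 :=
        Real.exp_le_one_iff.2 (neg_nonpos.2 (Real.exp_pos _).le)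
      calc Real.exp (-t) ^ j * Real.exp (-Real.exp (-t))
          ≤ Real.exp (-t) ^ j * 1 := mul_le_mul_of_nonneg_left h3 (by positivity)
        _ = Real.exp (-t) ^ j := mul_one _
        _ ≤ Real.exp (-t) := h2
        _ ≤ (Nat.factorial (j+2) : ℝ) * Real.exp (-t) := le_mul_of_one_le_left (Real.exp_nonneg _) hfac
    · rw [abs_of_nonpos ht, neg_neg]
      set u := Real.exp (-t) with hu
      have hu0 : (0:ℝ) < u := Real.exp_pos _
      have hkey : u ^ (j+2) / (Nat.factorial (j+2) : ℝ) ≤ Real.exp u :=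
        Real.pow_div_factorial_le_exp u hu0.le (j+2)
      rw [div_le_iff₀ (by positivity : (0:ℝ) < (Nat.factorial (j+2) : ℝ))] at hkey
      have h4 : Real.exp (-u) ≤ (Nat.factorial (j+2) : ℝ) / u ^ (j+2) := by
        rw [Real.exp_neg, le_div_iff₀ (by positivity : (0:ℝ) < u ^ (j+2))]
        calc (Real.exp u)⁻¹ * u ^ (j+2)
            ≤ (Real.exp u)⁻¹ * (Real.exp u * (Nat.factorial (j+2) : ℝ)) :=
              mul_le_mul_of_nonneg_left hkey (by positivity)
          _ = (Nat.factorial (j+2) : ℝ) := by field_simp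
      have hinv : u⁻¹ = Real.exp t := by rw [hu, ← Real.exp_neg, neg_neg]
      calc u ^ j * Real.exp (-u)
          ≤ u ^ j * ((Nat.factorial (j+2) : ℝ) / u ^ (j+2)) := mul_le_mul_of_nonneg_left h4 (by positivity)
        _ = (Nat.factorial (j+2) : ℝ) / u ^ 2 := by rw [pow_add]; field_simp
        _ = (Nat.factorial (j+2) : ℝ) * Real.exp t ^ 2 := by rw [div_eq_mul_inv, ← inv_pow, hinv]
        _ ≤ (Nat.factorial (j+2) : ℝ) * Real.exp t := by
            have h5 : Real.exp t ≤ 1 := Real.exp_le_one_iff.2 ht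
            have h6 : Real.exp t ^ 2 ≤ Real.exp t := by nlinarith [Real.exp_pos t]
            exact mul_le_mul_of_nonneg_left h6 (by positivity)
  refine (integrable_exp_neg_abs'.const_mul ((Nat.factorial (j+2) : ℝ))).mono ?_ ?_
  · exact (by fun_prop : Continuous fun t : ℝ => Real.exp (-t) ^ j * Real.exp (-Real.exp (-t))).aestronglyMeasurable
  · refine Filter.Eventually.of_forall fun t => ?_
    rw [Real.norm_eq_abs, Real.norm_eq_abs, abs_of_nonneg (by positivity),
      abs_of_nonneg (by positivity)]
    exact hbound t

lemma integrable_Fg_Tmap (p : Polynomial ℝ) : Integrable (Fg (Tmap p)) := by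
  set q := p - derivative p with hq
  have hfun : Fg (Tmap p) = fun t => ∑ k ∈ Finset.range (q.natDegree + 1),
      q.coeff k * (Real.exp (-t) ^ (k+1) * Real.exp (-Real.exp (-t))) := by
    funext t
    simp only [Fg, Tmap, eval_mul, eval_X, ← hq]
    rw [Polynomial.eval_eq_sum_range, Finset.mul_sum, Finset.sum_mul]
    refine Finset.sum_congr rfl fun k _ => ?_
    ring
  rw [hfun]
  apply integrable_finset_sum
  intro k _
  exact (integrable_G (k+1) (Nat.le_add_left 1 k)).const_mul _

open Complex in
lemma ibp_lemma (f : ℝ → ℂ) (hf : Integrable f) (hd : Differentiable ℝ f)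
    (hf' : Integrable (deriv f)) (ξ : ℝ) :
    ∫ t : ℝ, deriv f t * Complex.exp (-I * ξ * t) =
      (I * ξ) * ∫ t : ℝ, f t * Complex.exp (-I * ξ * t) := by
  have hπ : (Real.pi : ℝ) ≠ 0 := Real.pi_ne_zero
  have key : ∀ g : ℝ → ℂ, ∫ t : ℝ, g t * Complex.exp (-I * ξ * t)
      = FourierTransform.fourier g (ξ / (2 * Real.pi)) := by
    intro g
    rw [Real.fourier_real_eq_integral_exp_smul]
    refine integral_congr_ae (Filter.Eventually.of_forall fun v => ?_)
    simp only [smul_eq_mul]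
    rw [mul_comm]
    congr 2
    have : -2 * Real.pi * v * (ξ / (2 * Real.pi)) = -(ξ * v) := by
      field_simp
    rw [this]
    push_cast
    ring
  have h := congrFun (Real.fourier_deriv hf hd hf') (ξ / (2 * Real.pi))
  rw [key, h, smul_eq_mul, ← key]
  congr 1
  have hπC : (Real.pi : ℂ) ≠ 0 := Complex.ofReal_ne_zero.mpr hπ
  push_cast
  field_simp

open Complex in
lemma base_integral (ξ : ℝ) :
    ∫ t : ℝ, ((Real.exp (-t) * Real.exp (-Real.exp (-t)) : ℝ) : ℂ) * Complex.exp (-I * ξ * t)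
      = Complex.Gamma (1 + I * ξ) := by
  have h1 : Complex.Gamma (1 + I * ξ)
      = ∫ x in Ioi (0:ℝ), (Real.exp (-x) : ℂ) * (x : ℂ) ^ (I * ξ) := by
    rw [Complex.Gamma_eq_integral (by simp : 0 < (1 + I * (ξ:ℂ)).re), Complex.GammaIntegral]
    norm_num
  have himg : (fun t : ℝ => Real.exp (-t)) '' Set.univ = Ioi (0:ℝ) := by
    rw [Set.image_univ]
    ext y
    simp only [Set.mem_range, Set.mem_Ioi]
    constructor
    · rintro ⟨t, rfl⟩; exact Real.exp_pos _
    · intro hy; exact ⟨-Real.log y, by rw [neg_neg, Real.exp_log hy]⟩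
  have hder : ∀ t ∈ Set.univ, HasDerivWithinAt (fun t : ℝ => Real.exp (-t))
      (-Real.exp (-t)) Set.univ t := fun t _ => (hasDerivAt_expneg t).hasDerivWithinAt
  have hinj : Set.InjOn (fun t : ℝ => Real.exp (-t)) Set.univ := by
    intro a _ b _ h
    have := Real.exp_injective h
    linarith [neg_injective this]
  have hcov := integral_image_eq_integral_abs_deriv_smul MeasurableSet.univ hder hinj
      (fun y : ℝ => (Real.exp (-y) : ℂ) * (y : ℂ) ^ (I * ξ))
  rw [himg] at hcov
  rw [h1, hcov, Measure.restrict_univ]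
  refine integral_congr_ae (Filter.Eventually.of_forall fun t => ?_)
  simp only [abs_neg, Real.abs_exp, real_smul]
  have hc : ((Real.exp (-t) : ℝ) : ℂ) ^ (I * (ξ:ℂ)) = Complex.exp (-I * ξ * t) := by
    rw [Complex.cpow_def_of_ne_zero
      (by exact_mod_cast Real.exp_ne_zero (-t) : ((Real.exp (-t) : ℝ) : ℂ) ≠ 0)]
    rw [← Complex.ofReal_log (Real.exp_pos _).le, Real.log_exp]
    congr 1
    push_cast
    ring
  rw [hc]
  push_cast
  ring

open Complex in
lemma main_ind (ξ : ℝ) : ∀ m : ℕ,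
    ∫ t : ℝ, ((Fg (Tmap^[m+1] (1 : Polynomial ℝ)) t : ℝ) : ℂ) * Complex.exp (-I * ξ * t)
      = (I * ξ) ^ m * ∫ t : ℝ, ((Fg (Tmap (1 : Polynomial ℝ)) t : ℝ) : ℂ) * Complex.exp (-I * ξ * t)
  | 0 => by simp
  | (m+1) => by
    set p := Tmap^[m+1] (1 : Polynomial ℝ) with hpdef
    have hp : p = Tmap (Tmap^[m] (1 : Polynomial ℝ)) := Function.iterate_succ_apply' _ _ _
    have hd : ∀ t : ℝ, HasDerivAt (fun t : ℝ => ((Fg p t : ℝ) : ℂ)) ((Fg (Tmap p) t : ℝ) : ℂ) t :=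
      fun t => (hasDerivAt_Fg p t).ofReal_comp
    have hderiv : (deriv fun t : ℝ => ((Fg p t : ℝ) : ℂ)) = fun t => ((Fg (Tmap p) t : ℝ) : ℂ) :=
      funext fun t => (hd t).deriv
    have h1 : Integrable (fun t : ℝ => ((Fg p t : ℝ) : ℂ)) := by
      rw [hp]; exact (integrable_Fg_Tmap _).ofReal
    have h2 : Integrable (deriv fun t : ℝ => ((Fg p t : ℝ) : ℂ)) := by
      rw [hderiv]; exact (integrable_Fg_Tmap _).ofReal
    have h3 : Differentiable ℝ (fun t : ℝ => ((Fg p t : ℝ) : ℂ)) :=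
      fun t => (hd t).differentiableAt
    have hibp := ibp_lemma _ h1 h3 h2 ξ
    rw [hderiv] at hibp
    have hit : Tmap^[m+1+1] (1 : Polynomial ℝ) = Tmap p := by
      rw [hpdef]; exact Function.iterate_succ_apply' _ _ _
    calc ∫ t : ℝ, ((Fg (Tmap^[m+1+1] (1 : Polynomial ℝ)) t : ℝ) : ℂ) * Complex.exp (-I * ξ * t)
        = (I * ξ) * ∫ t : ℝ, ((Fg p t : ℝ) : ℂ) * Complex.exp (-I * ξ * t) := by
          rw [hit]; exact hibp
      _ = (I * ξ) * ((I * ξ) ^ m *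
            ∫ t : ℝ, ((Fg (Tmap (1 : Polynomial ℝ)) t : ℝ) : ℂ) * Complex.exp (-I * ξ * t)) := by
          rw [hpdef, main_ind ξ m]
      _ = (I * ξ) ^ (m+1) *
            ∫ t : ℝ, ((Fg (Tmap (1 : Polynomial ℝ)) t : ℝ) : ℂ) * Complex.exp (-I * ξ * t) := by
          ring

open Complex in
theorem fourier_transform_gompertz_nth_deriv
    (x : ℝ → ℝ) (hxdef : ∀ t, x t = Real.exp (-Real.exp (-t)))
    (n : ℕ) (hn : 1 ≤ n) (ξ : ℝ) :
    (1 / Real.sqrt (2 * Real.pi)) *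
      ∫ t : ℝ, (Complex.ofReal (iteratedDeriv n x t)) * Complex.exp (-I * ξ * t) =
      (I * ξ) ^ (n - 1) * Complex.Gamma (1 + I * ξ) / Real.sqrt (2 * Real.pi) := by
  obtain ⟨m, rfl⟩ : ∃ m, n = m + 1 := ⟨n - 1, (Nat.succ_pred_eq_of_pos hn).symm⟩
  have hiter : iteratedDeriv (m+1) x = Fg (Tmap^[m+1] 1) := iteratedDeriv_x x hxdef (m+1)
  have hT1 : Fg (Tmap (1 : Polynomial ℝ)) = fun t => Real.exp (-t) * Real.exp (-Real.exp (-t)) := by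
    funext t
    simp [Fg, Tmap]
  have hbase : ∫ t : ℝ, ((Fg (Tmap (1 : Polynomial ℝ)) t : ℝ) : ℂ) * Complex.exp (-I * ξ * t)
      = Complex.Gamma (1 + I * ξ) := by
    simp only [hT1]
    exact base_integral ξ
  simp only [hiter]
  rw [main_ind ξ m, hbase]
  simp only [Nat.add_sub_cancel]
  ring
end
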